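/- Let g = g₀ + a be an asymptotically AdS hyperbolic metric on S² × [r₀,∞) with g₀ = dr²/(1+r²) + r²σ and a_{rr} = 𝐦^r/r⁵ + O(r⁻⁶), a_{rα} = O(r⁻³), a_{αβ} = 𝐦^g_{αβ}/r + O(r⁻²). If u = √(1+r²) + u₀ + O(r⁻¹⁺ᵉ) and f = O(r⁻³) with appropriate derivative decay, then g₁ = g + u² df² satisfies the same asymptotic expansion with identical leading coefficients 𝐦^r and 𝐦^g; in particular the mass aspect function and the total mass m = (1/16π)∫_{S²}(3 Tr_σ 𝐦^g + 2𝐦^r) are unchanged. -/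

import Mathlib

open Filter Asymptotics

/-- Lemma 3.1: the generalized Jang deformation `g₁ = g + u² df²` with
`u = √(1+r²) + u₀ + O(r^{−1+ε})` and `f = O(r⁻³)` (with derivative decay
`f_r = O(r⁻⁴)`, `f_α = O(r⁻³)`) preserves the asymptotically AdS hyperbolic
expansion with identical leading coefficients `𝐦^r`, `𝐦^g`; in particular the
mass aspect function and the total mass are unchanged.  Here `a = g − g₀` and
the components are functions of `r` and a point `y = (θ,φ)` of `S²`;
index `0` is the radial direction. -/
theorem stmt13 (a : ℝ → ℝ × ℝ → Fin 3 → Fin 3 → ℝ)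
    (mr : ℝ × ℝ → ℝ) (mg : ℝ × ℝ → Fin 3 → Fin 3 → ℝ)
    (u f : ℝ → ℝ × ℝ → ℝ) (df : ℝ → ℝ × ℝ → Fin 3 → ℝ)
    (u₀ ε : ℝ) (hε : 0 < ε) (hε1 : ε < 1)
    (h_arr : ∀ y, (fun r => a r y 0 0 - mr y / r ^ 5) =O[atTop] fun r : ℝ => r ^ (-6 : ℤ))
    (h_ara : ∀ y, ∀ α : Fin 3, α ≠ 0 →
      (fun r => a r y 0 α) =O[atTop] fun r : ℝ => r ^ (-3 : ℤ))
    (h_aab : ∀ y, ∀ α β : Fin 3, α ≠ 0 → β ≠ 0 →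
      (fun r => a r y α β - mg y α β / r) =O[atTop] fun r : ℝ => r ^ (-2 : ℤ))
    (hu : ∀ y, (fun r => u r y - Real.sqrt (1 + r ^ 2) - u₀) =O[atTop]
      fun r : ℝ => r ^ (ε - 1))
    (hf : ∀ y, (fun r => f r y) =O[atTop] fun r : ℝ => r ^ (-3 : ℤ))
    (hdf0 : ∀ y, (fun r => df r y 0) =O[atTop] fun r : ℝ => r ^ (-4 : ℤ))
    (hdfa : ∀ y, ∀ α : Fin 3, α ≠ 0 →
      (fun r => df r y α) =O[atTop] fun r : ℝ => r ^ (-3 : ℤ)) :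
    (∀ y, (fun r => (a r y 0 0 + u r y ^ 2 * df r y 0 * df r y 0) - mr y / r ^ 5)
        =O[atTop] fun r : ℝ => r ^ (-6 : ℤ)) ∧
      (∀ y, ∀ α : Fin 3, α ≠ 0 →
        (fun r => a r y 0 α + u r y ^ 2 * df r y 0 * df r y α)
          =O[atTop] fun r : ℝ => r ^ (-3 : ℤ)) ∧
      (∀ y, ∀ α β : Fin 3, α ≠ 0 → β ≠ 0 →
        (fun r => (a r y α β + u r y ^ 2 * df r y α * df r y β) - mg y α β / r)
          =O[atTop] fun r : ℝ => r ^ (-2 : ℤ)) := by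
  -- `u` is O(r)
  have hu_lin : ∀ y, (fun r => u r y) =O[atTop] fun r : ℝ => r := by
    intro y
    have h1 : (fun r : ℝ => Real.sqrt (1 + r ^ 2)) =O[atTop] fun r : ℝ => r := by
      apply IsBigO.of_bound 2
      filter_upwards [eventually_ge_atTop (1 : ℝ)] with r hr
      rw [Real.norm_eq_abs, Real.norm_eq_abs,
        abs_of_nonneg (Real.sqrt_nonneg _), abs_of_nonneg (by linarith : (0:ℝ) ≤ r)]
      have hle : 1 + r ^ 2 ≤ (2 * r) ^ 2 := by nlinarith
      calc Real.sqrt (1 + r ^ 2) ≤ Real.sqrt ((2 * r) ^ 2) := Real.sqrt_le_sqrt hle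
        _ = 2 * r := by rw [Real.sqrt_sq (by linarith)]
    have h2 : (fun _ : ℝ => u₀) =O[atTop] fun r : ℝ => r := by
      apply IsBigO.of_bound |u₀|
      filter_upwards [eventually_ge_atTop (1 : ℝ)] with r hr
      rw [Real.norm_eq_abs, Real.norm_eq_abs, abs_of_nonneg (by linarith : (0:ℝ) ≤ r)]
      nlinarith [abs_nonneg u₀]
    have h3 : (fun r : ℝ => r ^ (ε - 1)) =O[atTop] fun r : ℝ => r := by
      apply IsBigO.of_bound 1
      filter_upwards [eventually_ge_atTop (1 : ℝ)] with r hr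
      rw [one_mul, Real.norm_eq_abs, Real.norm_eq_abs,
        abs_of_nonneg (Real.rpow_nonneg (by linarith) _),
        abs_of_nonneg (by linarith : (0:ℝ) ≤ r)]
      calc r ^ (ε - 1) ≤ r ^ (1 : ℝ) :=
            Real.rpow_le_rpow_of_exponent_le hr (by linarith)
        _ = r := Real.rpow_one r
    have h := (((hu y).trans h3).add h1).add h2
    exact h.congr_left fun r => by ring
  -- monotonicity of zpow scales
  have hmono : ∀ k l : ℤ, k ≤ l →
      (fun r : ℝ => r ^ k) =O[atTop] fun r : ℝ => r ^ l := by
    intro k l hkl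
    apply IsBigO.of_bound 1
    filter_upwards [eventually_ge_atTop (1 : ℝ)] with r hr
    rw [one_mul, Real.norm_eq_abs, Real.norm_eq_abs,
      abs_of_nonneg (zpow_nonneg (by linarith) _),
      abs_of_nonneg (zpow_nonneg (by linarith) _)]
    exact zpow_le_zpow_right₀ hr hkl
  -- the key product estimate
  have key : ∀ y (v w : ℝ → ℝ) (k l : ℤ),
      v =O[atTop] (fun r : ℝ => r ^ k) → w =O[atTop] (fun r : ℝ => r ^ l) →
      (fun r => u r y ^ 2 * v r * w r) =O[atTop] fun r : ℝ => r ^ (2 + k + l) := by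
    intro y v w k l hv hw
    have h := (((hu_lin y).mul (hu_lin y)).mul hv).mul hw
    have heq : (fun r : ℝ => r * r * r ^ k * r ^ l) =ᶠ[atTop]
        fun r : ℝ => r ^ (2 + k + l) := by
      filter_upwards [eventually_gt_atTop (0 : ℝ)] with r hr
      rw [zpow_add₀ hr.ne', zpow_add₀ hr.ne']
      norm_num [zpow_two]
      left; left; ring
    exact ((h.congr_left fun r => by ring).trans heq.isBigO)
  refine ⟨fun y => ?_, fun y α hα => ?_, fun y α β hα hβ => ?_⟩
  · have ht := key y _ _ (-4) (-4) (hdf0 y) (hdf0 y)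
    norm_num at ht
    exact ((h_arr y).add ht).congr_left fun r => by ring
  · have ht := key y _ _ (-4) (-3) (hdf0 y) (hdfa y α hα)
    norm_num at ht
    exact ((h_ara y α hα).add (ht.trans (hmono (-5) (-3) (by norm_num)))).congr_left
      fun r => by ring
  · have ht := key y _ _ (-3) (-3) (hdfa y α hα) (hdfa y β hβ)
    norm_num at ht
    exact ((h_aab y α β hα hβ).add (ht.trans (hmono (-4) (-2) (by norm_num)))).congr_left
      fun r => by ring
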